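/- Let μ be a positive Radon measure on I = [0,T]. Let g ∈ L¹(I, ℝ; μ) be a nonnegative function and β ≥ 0 be such that 0 ≤ μ({t})·g(t) ≤ β < 1 for all t ∈ I. Let φ ∈ L^∞(I, ℝ; μ) be a nonnegative function satisfying φ(t) ≤ α + ∫_{]0,t]} g(s)φ(s) dμ(s) for all t ∈ I, where α ≥ 0 is a constant. Then φ(t) ≤ α·exp( (1/(1−β)) ∫_{]0,t]} g(s) dμ(s) ) for all t ∈ I. -/

import Mathlib

open MeasureTheory Set
open scoped NNReal ENNReal

namespace GronwallAux

open Filter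

noncomputable def V (ν : Measure ℝ) (t : ℝ) : ℝ := (ν (Set.Ioc 0 t)).toReal

variable {ν : Measure ℝ} [IsFiniteMeasure ν]

lemma V_mono : Monotone (V ν) := fun a b h =>
  ENNReal.toReal_mono (measure_ne_top _ _) (measure_mono (Ioc_subset_Ioc_right h))

lemma V_nonneg (t : ℝ) : 0 ≤ V ν t := ENNReal.toReal_nonneg

lemma V_meas : Measurable (V ν) := (V_mono (ν := ν)).measurable

lemma integrableOn_mono_nonneg {h : ℝ → ℝ} (hm : Monotone h) (h0 : ∀ s, 0 ≤ h s) (t : ℝ) :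
    IntegrableOn h (Ioc 0 t) ν := by
  refine (integrable_const (h t)).mono' hm.measurable.aestronglyMeasurable ?_
  filter_upwards [ae_restrict_mem measurableSet_Ioc] with s hs
  rw [Real.norm_of_nonneg (h0 s)]
  exact hm hs.2

lemma tail_bound {β : ℝ} (hβ0 : 0 ≤ β) (hatom : ∀ s : ℝ, ν {s} ≤ ENNReal.ofReal β)
    {t u : ℝ} (hu : 0 < u) :
    ν ({a : ℝ | u ≤ V ν a} ∩ Ioc 0 t) ≤ ENNReal.ofReal (V ν t - u + β) := by
  set A := {a : ℝ | u ≤ V ν a} ∩ Ioc 0 t with hA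
  rcases A.eq_empty_or_nonempty with hAe | hAne
  · simp [hAe]
  set s₀ := sInf A with hs₀
  have hbdd : BddBelow A := ⟨0, fun x hx => hx.2.1.le⟩
  obtain ⟨a₀, ha₀⟩ := hAne
  have hs₀t : s₀ ≤ t := (csInf_le hbdd ha₀).trans ha₀.2.2
  have hs₀0 : 0 ≤ s₀ := le_csInf ⟨a₀, ha₀⟩ fun x hx => hx.2.1.le
  have huV : u ≤ V ν s₀ := by
    have key : ∀ n : ℕ, u ≤ V ν (s₀ + ((n : ℝ) + 1)⁻¹) := by
      intro n
      have hpos : (0:ℝ) < ((n : ℝ) + 1)⁻¹ := by positivity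
      obtain ⟨b, hb, hblt⟩ := (csInf_lt_iff hbdd ⟨a₀, ha₀⟩).mp
        (lt_add_of_pos_right s₀ hpos)
      exact hb.1.trans (V_mono hblt.le)
    have hiInter : ⋂ n : ℕ, Ioc (0:ℝ) (s₀ + ((n : ℝ) + 1)⁻¹) = Ioc 0 s₀ := by
      ext x
      simp only [mem_iInter, mem_Ioc]
      constructor
      · rintro h
        refine ⟨(h 0).1, ?_⟩
        by_contra hx
        push_neg at hx
        obtain ⟨n, hn⟩ := exists_nat_gt (x - s₀)⁻¹
        have hxs : 0 < x - s₀ := by linarith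
        have h1 : ((n : ℝ) + 1)⁻¹ < x - s₀ := by
          rw [inv_lt_comm₀ (by positivity) hxs]
          linarith
        have := (h n).2
        linarith
      · rintro ⟨h1, h2⟩ n
        exact ⟨h1, h2.trans (le_add_of_nonneg_right (by positivity))⟩
    have htend : Tendsto (fun n : ℕ => V ν (s₀ + ((n : ℝ) + 1)⁻¹)) atTop (nhds (V ν s₀)) := by
      have h1 : Tendsto (fun n : ℕ => ν (Ioc (0:ℝ) (s₀ + ((n : ℝ) + 1)⁻¹))) atTop
          (nhds (ν (Ioc 0 s₀))) := by
        rw [← hiInter]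
        exact tendsto_measure_iInter_atTop (fun n => measurableSet_Ioc.nullMeasurableSet)
          (fun i j hij => Ioc_subset_Ioc_right (by
            have hij' : (i : ℝ) ≤ (j : ℝ) := Nat.cast_le.mpr hij
            have : ((j : ℝ) + 1)⁻¹ ≤ ((i : ℝ) + 1)⁻¹ := by
              apply inv_anti₀ (by positivity)
              linarith
            linarith))
          ⟨0, measure_ne_top _ _⟩
      exact (ENNReal.tendsto_toReal (measure_ne_top _ _)).comp h1
    exact ge_of_tendsto' htend key
  have hs₀pos : 0 < s₀ := by
    rcases hs₀0.lt_or_eq with h | h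
    · exact h
    · exfalso
      have hV0 : V ν s₀ = 0 := by
        rw [← h]
        simp [V]
      rw [hV0] at huV
      linarith
  have hsub : Ioo 0 s₀ ⊆ Ioc 0 t := fun x hx => ⟨hx.1, hx.2.le.trans hs₀t⟩
  have hVs₀ : V ν s₀ = (ν (Ioo 0 s₀)).toReal + (ν {s₀}).toReal := by
    rw [V, ← Set.Ioo_union_right hs₀pos,
      measure_union (by simp) (measurableSet_singleton _),
      ENNReal.toReal_add (measure_ne_top _ _) (measure_ne_top _ _)]
  have hb : (ν {s₀}).toReal ≤ β := by
    calc (ν {s₀}).toReal ≤ (ENNReal.ofReal β).toReal :=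
          ENNReal.toReal_mono ENNReal.ofReal_ne_top (hatom s₀)
    _ = β := ENNReal.toReal_ofReal hβ0
  have hsubA : A ⊆ Ioc 0 t \ Ioo 0 s₀ := by
    intro x hx
    exact ⟨hx.2, fun hxo => absurd (csInf_le hbdd hx) (not_le.mpr hxo.2)⟩
  have hVtu : u ≤ V ν t := ha₀.1.trans (V_mono ha₀.2.2)
  rw [ENNReal.le_ofReal_iff_toReal_le (measure_ne_top _ _) (by linarith)]
  calc (ν A).toReal ≤ (ν (Ioc 0 t \ Ioo 0 s₀)).toReal :=
        ENNReal.toReal_mono (measure_ne_top _ _) (measure_mono hsubA)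
  _ = V ν t - (ν (Ioo 0 s₀)).toReal := by
      rw [measure_diff hsub measurableSet_Ioo.nullMeasurableSet (measure_ne_top _ _),
        ENNReal.toReal_sub_of_le (measure_mono hsub) (measure_ne_top _ _)]
      rfl
  _ ≤ V ν t - u + β := by linarith


lemma core {β : ℝ} (hβ0 : 0 ≤ β) (hβ1 : β < 1) (hatom : ∀ s : ℝ, ν {s} ≤ ENNReal.ofReal β)
    (t : ℝ) :
    ∫ s in Ioc 0 t, Real.exp ((1 - β)⁻¹ * V ν s) ∂ν ≤ Real.exp ((1 - β)⁻¹ * V ν t) - 1 := by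
  set c : ℝ := (1 - β)⁻¹ with hc
  have h1β : 0 < 1 - β := by linarith
  have hcpos : 0 < c := inv_pos.mpr h1β
  have hcmul : c * (1 - β) = 1 := inv_mul_cancel₀ h1β.ne'
  have hc1 : 1 ≤ c := by nlinarith
  set K := V ν t with hK
  have hK0 : 0 ≤ K := V_nonneg t
  set m := ν.restrict (Ioc 0 t) with hm
  have hexp_int : ∀ a : ℝ, ∫ u in (0:ℝ)..a, c * Real.exp (c * u) = Real.exp (c * a) - 1 := by
    intro a
    have h1 : ∀ x ∈ uIcc (0:ℝ) a, HasDerivAt (fun u => Real.exp (c * u)) (c * Real.exp (c * x)) x := by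
      intro x _
      have := ((hasDerivAt_id x).const_mul c).exp
      simpa [mul_comm] using this
    have h2 : IntervalIntegrable (fun u => c * Real.exp (c * u)) volume 0 a :=
      (continuous_const.mul (Real.continuous_exp.comp (continuous_const.mul continuous_id))).intervalIntegrable 0 a
    simpa [Real.exp_zero] using intervalIntegral.integral_eq_sub_of_hasDerivAt h1 h2
  have hmeasV : Measurable (V ν) := V_meas
  have hEmeas : Measurable fun s => Real.exp (c * V ν s) :=
    Real.measurable_exp.comp (hmeasV.const_mul c)
  have hA : ∫ s in Ioc 0 t, Real.exp (c * V ν s) ∂ν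
      = (∫⁻ s, ENNReal.ofReal (Real.exp (c * V ν s)) ∂m).toReal := by
    rw [hm]
    exact integral_eq_lintegral_of_nonneg_ae (ae_of_all _ fun s => (Real.exp_pos _).le)
      hEmeas.aestronglyMeasurable
  have hB : ∫⁻ s, ENNReal.ofReal (Real.exp (c * V ν s)) ∂m
      = m univ + ∫⁻ s, ENNReal.ofReal (∫ u in (0:ℝ)..(V ν s), c * Real.exp (c * u)) ∂m := by
    have hpt : ∀ s : ℝ, ENNReal.ofReal (Real.exp (c * V ν s))
        = 1 + ENNReal.ofReal (∫ u in (0:ℝ)..(V ν s), c * Real.exp (c * u)) := by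
      intro s
      rw [hexp_int, ← ENNReal.ofReal_one,
        ← ENNReal.ofReal_add zero_le_one
          (sub_nonneg.mpr (Real.one_le_exp (mul_nonneg hcpos.le (V_nonneg s))))]
      ring_nf
    simp_rw [hpt]
    rw [lintegral_add_left measurable_const]
    simp
  have hC : ∫⁻ s, ENNReal.ofReal (∫ u in (0:ℝ)..(V ν s), c * Real.exp (c * u)) ∂m
      = ∫⁻ u in Ioi 0, m {a : ℝ | u ≤ V ν a} * ENNReal.ofReal (c * Real.exp (c * u)) :=
    lintegral_comp_eq_lintegral_meas_le_mul m (ae_of_all _ V_nonneg) hmeasV.aemeasurable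
      (fun u _ => (continuous_const.mul (Real.continuous_exp.comp
        (continuous_const.mul continuous_id))).intervalIntegrable 0 u)
      (ae_of_all _ fun u => mul_nonneg hcpos.le (Real.exp_pos _).le)
  have hD : ∫⁻ u in Ioi 0, m {a : ℝ | u ≤ V ν a} * ENNReal.ofReal (c * Real.exp (c * u))
      ≤ ∫⁻ u in Ioi (0:ℝ), (Ioc (0:ℝ) K).indicator
          (fun u => ENNReal.ofReal ((K - u + β) * (c * Real.exp (c * u)))) u := by
    apply setLIntegral_mono' measurableSet_Ioi
    intro u hu
    have hmA : m {a : ℝ | u ≤ V ν a} = ν ({a : ℝ | u ≤ V ν a} ∩ Ioc 0 t) := by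
      rw [hm]
      exact Measure.restrict_apply (show MeasurableSet {a : ℝ | u ≤ V ν a} from hmeasV measurableSet_Ici)
    by_cases huK : u ≤ K
    · rw [indicator_of_mem (show u ∈ Ioc (0:ℝ) K from ⟨hu, huK⟩),
        show ENNReal.ofReal ((K - u + β) * (c * Real.exp (c * u)))
            = ENNReal.ofReal (K - u + β) * ENNReal.ofReal (c * Real.exp (c * u)) from
          ENNReal.ofReal_mul (by linarith), hmA]
      exact mul_le_mul_left (tail_bound hβ0 hatom hu) _
    · have hemp : {a : ℝ | u ≤ V ν a} ∩ Ioc 0 t = ∅ := by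
        ext x
        simp only [mem_inter_iff, mem_setOf_eq, mem_Ioc, mem_empty_iff_false, iff_false, not_and]
        intro hxu hx1 hx2
        exact huK (hxu.trans (V_mono hx2))
      rw [hmA, hemp]
      simp
  have hE : ∫⁻ u in Ioi (0:ℝ), (Ioc (0:ℝ) K).indicator
        (fun u => ENNReal.ofReal ((K - u + β) * (c * Real.exp (c * u)))) u
      = ∫⁻ u in Ioc (0:ℝ) K, ENNReal.ofReal ((K - u + β) * (c * Real.exp (c * u))) := by
    rw [lintegral_indicator measurableSet_Ioc, Measure.restrict_restrict measurableSet_Ioc,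
      inter_eq_self_of_subset_left Ioc_subset_Ioi_self]
  have hcont : Continuous fun u : ℝ => (K - u + β) * (c * Real.exp (c * u)) := by
    fun_prop
  have hF : ∫⁻ u in Ioc (0:ℝ) K, ENNReal.ofReal ((K - u + β) * (c * Real.exp (c * u)))
      = ENNReal.ofReal (∫ u in Ioc (0:ℝ) K, (K - u + β) * (c * Real.exp (c * u))) := by
    rw [← ofReal_integral_eq_lintegral_ofReal hcont.integrableOn_Ioc]
    filter_upwards [ae_restrict_mem measurableSet_Ioc] with u hu
    exact mul_nonneg (by linarith [hu.2]) (mul_nonneg hcpos.le (Real.exp_pos _).le)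
  have hG : ∫ u in Ioc (0:ℝ) K, (K - u + β) * (c * Real.exp (c * u))
      = Real.exp (c * K) - 1 - K := by
    rw [← intervalIntegral.integral_of_le hK0]
    have hder : ∀ x ∈ uIcc (0:ℝ) K,
        HasDerivAt (fun u => Real.exp (c * u) * (K - u + β) + Real.exp (c * u) * (1 - β))
          ((K - x + β) * (c * Real.exp (c * x))) x := by
      intro x _
      have h1 : HasDerivAt (fun u : ℝ => Real.exp (c * u)) (c * Real.exp (c * x)) x := by
        simpa [mul_comm] using ((hasDerivAt_id x).const_mul c).exp
      have h2 : HasDerivAt (fun u : ℝ => K - u + β) (-1) x := by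
        simpa using ((hasDerivAt_id x).const_sub K).add_const β
      have h3 := (h1.mul h2).add (h1.mul_const (1 - β))
      refine h3.congr_deriv ?_
      have hex := Real.exp_pos (c * x)
      linear_combination (Real.exp (c * x)) * hcmul
    have hint : IntervalIntegrable (fun u => (K - u + β) * (c * Real.exp (c * u))) volume 0 K :=
      hcont.intervalIntegrable 0 K
    rw [intervalIntegral.integral_eq_sub_of_hasDerivAt hder hint]
    simp only [mul_zero, Real.exp_zero]
    ring
  have hmuniv : m univ = ENNReal.ofReal K := by
    rw [hm, Measure.restrict_apply_univ, hK]
    rw [V, ENNReal.ofReal_toReal (measure_ne_top _ _)]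
  have hnn2 : 0 ≤ Real.exp (c * K) - 1 - K := by
    nlinarith [Real.add_one_le_exp (c * K)]
  have final : (∫⁻ s, ENNReal.ofReal (Real.exp (c * V ν s)) ∂m)
      ≤ ENNReal.ofReal (Real.exp (c * K) - 1) := by
    calc (∫⁻ s, ENNReal.ofReal (Real.exp (c * V ν s)) ∂m)
        = m univ + ∫⁻ s, ENNReal.ofReal (∫ u in (0:ℝ)..(V ν s), c * Real.exp (c * u)) ∂m := hB
    _ = ENNReal.ofReal K + ∫⁻ u in Ioi 0, m {a : ℝ | u ≤ V ν a}
          * ENNReal.ofReal (c * Real.exp (c * u)) := by rw [hmuniv, hC]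
    _ ≤ ENNReal.ofReal K + ∫⁻ u in Ioi (0:ℝ), (Ioc (0:ℝ) K).indicator
          (fun u => ENNReal.ofReal ((K - u + β) * (c * Real.exp (c * u)))) u :=
        add_le_add_right hD _
    _ = ENNReal.ofReal K + ENNReal.ofReal (Real.exp (c * K) - 1 - K) := by rw [hE, hF, hG]
    _ = ENNReal.ofReal (Real.exp (c * K) - 1) := by
        rw [← ENNReal.ofReal_add hK0 hnn2]
        congr 1
        ring
  rw [hA]
  calc (∫⁻ s, ENNReal.ofReal (Real.exp (c * V ν s)) ∂m).toReal
      ≤ (ENNReal.ofReal (Real.exp (c * K) - 1)).toReal :=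
        ENNReal.toReal_mono ENNReal.ofReal_ne_top final
  _ = Real.exp (c * K) - 1 := ENNReal.toReal_ofReal (by nlinarith)


noncomputable def Jit (ν : Measure ℝ) : ℕ → ℝ → ℝ
  | 0 => fun _ => 1
  | n + 1 => fun t => ∫ s in Ioc 0 t, Jit ν n s ∂ν

lemma Jit_nonneg_mono (n : ℕ) : (∀ s, 0 ≤ Jit ν n s) ∧ Monotone (Jit ν n) := by
  induction n with
  | zero => exact ⟨fun _ => zero_le_one, monotone_const⟩
  | succ n ih =>
    obtain ⟨h0, hm⟩ := ih
    constructor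
    · intro s
      exact integral_nonneg fun x => h0 x
    · intro t₁ t₂ h
      simp only [Jit]
      exact setIntegral_mono_set (integrableOn_mono_nonneg hm h0 t₂) (ae_of_all _ h0)
        (HasSubset.Subset.eventuallyLE (Ioc_subset_Ioc_right h))

lemma Jit_integrableOn (n : ℕ) (t : ℝ) : IntegrableOn (Jit ν n) (Ioc 0 t) ν :=
  integrableOn_mono_nonneg (Jit_nonneg_mono n).2 (Jit_nonneg_mono n).1 t

noncomputable def Sit (ν : Measure ℝ) (n : ℕ) (t : ℝ) : ℝ := ∑ k ∈ Finset.range n, Jit ν k t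

lemma Sit_integrableOn (n : ℕ) (t : ℝ) : IntegrableOn (fun s => Sit ν n s) (Ioc 0 t) ν :=
  integrable_finset_sum _ fun i _ => Jit_integrableOn i t

lemma Sit_succ (n : ℕ) (t : ℝ) : Sit ν (n + 1) t = 1 + ∫ s in Ioc 0 t, Sit ν n s ∂ν := by
  simp only [Sit]
  rw [Finset.sum_range_succ']
  have h1 : ∀ i, Jit ν (i + 1) t = ∫ s in Ioc 0 t, Jit ν i s ∂ν := fun i => rfl
  simp_rw [h1]
  rw [← integral_finset_sum _ fun i _ => Jit_integrableOn i t]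
  simp only [Jit]
  ring

theorem abstract_gronwall {β T α M : ℝ} (hβ0 : 0 ≤ β) (hβ1 : β < 1)
    (hatom : ∀ s : ℝ, ν {s} ≤ ENNReal.ofReal β) (hα : 0 ≤ α) (hM : 0 ≤ M)
    {φ : ℝ → ℝ} (hφ0 : ∀ t ∈ Icc 0 T, 0 ≤ φ t)
    (hbound : ∀ t ∈ Icc 0 T, φ t ≤ M)
    (hmain : ∀ t ∈ Icc 0 T, φ t ≤ α + ∫ s in Ioc 0 t, φ s ∂ν) :
    ∀ t ∈ Icc 0 T, φ t ≤ α * Real.exp ((1 - β)⁻¹ * V ν t) := by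
  set c : ℝ := (1 - β)⁻¹ with hc
  have h1β : 0 < 1 - β := by linarith
  have hcpos : 0 < c := inv_pos.mpr h1β
  set E : ℝ → ℝ := fun s => Real.exp (c * V ν s) with hE
  have hEmono : Monotone E := fun a b h =>
    Real.exp_le_exp.mpr (mul_le_mul_of_nonneg_left (V_mono h) hcpos.le)
  have hE0 : ∀ s, 0 ≤ E s := fun s => (Real.exp_pos _).le
  have hEint : ∀ t : ℝ, IntegrableOn E (Ioc 0 t) ν := integrableOn_mono_nonneg hEmono hE0
  have hSE : ∀ n, ∀ t ∈ Icc 0 T, Sit ν n t ≤ E t := by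
    intro n
    induction n with
    | zero =>
      intro t _
      simpa [Sit] using hE0 t
    | succ n ih =>
      intro t ht
      rw [Sit_succ]
      have h1 : ∫ s in Ioc 0 t, Sit ν n s ∂ν ≤ ∫ s in Ioc 0 t, E s ∂ν := by
        refine setIntegral_mono_on (Sit_integrableOn n t) (hEint t) measurableSet_Ioc ?_
        intro s hs
        exact ih s ⟨hs.1.le, hs.2.trans ht.2⟩
      have h2 := core hβ0 hβ1 hatom t
      rw [← hc] at h2
      simp only [← hE] at h2
      linarith
  have hMain : ∀ n, ∀ t ∈ Icc 0 T, φ t ≤ α * Sit ν n t + M * Jit ν n t := by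
    intro n
    induction n with
    | zero =>
      intro t ht
      simpa [Sit, Jit] using hbound t ht
    | succ n ih =>
      intro t ht
      have h0 : 0 ≤ᵐ[ν.restrict (Ioc 0 t)] φ := by
        filter_upwards [ae_restrict_mem measurableSet_Ioc] with s hs
        exact hφ0 s ⟨hs.1.le, hs.2.trans ht.2⟩
      have hup : Integrable (fun s => α * Sit ν n s + M * Jit ν n s) (ν.restrict (Ioc 0 t)) :=
        ((Sit_integrableOn n t).const_mul α).add ((Jit_integrableOn n t).const_mul M)
      have hle : φ ≤ᵐ[ν.restrict (Ioc 0 t)] fun s => α * Sit ν n s + M * Jit ν n s := by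
        filter_upwards [ae_restrict_mem measurableSet_Ioc] with s hs
        exact ih s ⟨hs.1.le, hs.2.trans ht.2⟩
      have h1 : ∫ s in Ioc 0 t, φ s ∂ν ≤ ∫ s in Ioc 0 t, (α * Sit ν n s + M * Jit ν n s) ∂ν :=
        integral_mono_of_nonneg h0 hup hle
      have h2 : ∫ s in Ioc 0 t, (α * Sit ν n s + M * Jit ν n s) ∂ν
          = α * (∫ s in Ioc 0 t, Sit ν n s ∂ν) + M * Jit ν (n + 1) t := by
        rw [integral_add ((Sit_integrableOn n t).const_mul α) ((Jit_integrableOn n t).const_mul M),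
          integral_const_mul, integral_const_mul]
        rfl
      have h3 := hmain t ht
      have h4 : α * Sit ν (n + 1) t + M * Jit ν (n + 1) t
          = α + (α * (∫ s in Ioc 0 t, Sit ν n s ∂ν) + M * Jit ν (n + 1) t) := by
        rw [Sit_succ]
        ring
      rw [h4]
      rw [h2] at h1
      linarith
  intro t ht
  have hsum : Summable (fun n => Jit ν n t) :=
    summable_of_sum_range_le (fun n => (Jit_nonneg_mono n).1 t) (fun n => hSE n t ht)
  have hJ0 : Tendsto (fun n => Jit ν n t) atTop (nhds 0) := hsum.tendsto_atTop_zero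
  have htend : Tendsto (fun n => α * E t + M * Jit ν n t) atTop (nhds (α * E t)) := by
    have := tendsto_const_nhds (x := α * E t) (f := atTop (α := ℕ)) |>.add
      ((hJ0.const_mul M))
    simpa using this
  refine ge_of_tendsto' htend fun n => ?_
  have h5 := hMain n t ht
  have h6 : α * Sit ν n t ≤ α * E t := mul_le_mul_of_nonneg_left (hSE n t ht) hα
  linarith

end GronwallAux

/-- Gronwall lemma for Radon measures. Let `μ` be a positive Radon
measure on `I = [0,T]`, `g ∈ L¹(I,ℝ;μ)` nonnegative with `μ({t}) g(t) ≤ β < 1` on `I`,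
and `φ ∈ L^∞(I,ℝ;μ)` nonnegative with `φ(t) ≤ α + ∫_{]0,t]} g φ dμ` on `I` for a
constant `α ≥ 0`. Then `φ(t) ≤ α exp((1/(1-β)) ∫_{]0,t]} g dμ)` on `I`. -/
theorem gronwall_radon_measure (T : ℝ) (hT : 0 < T)
    (μ : Measure ℝ) [IsFiniteMeasure μ]
    (g : ℝ → ℝ) (hg_int : IntegrableOn g (Icc 0 T) μ)
    (hg0 : ∀ t ∈ Icc 0 T, 0 ≤ g t)
    (β : ℝ) (hβ0 : 0 ≤ β) (hβ1 : β < 1)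
    (hatom : ∀ t ∈ Icc 0 T, (μ {t}).toReal * g t ≤ β)
    (φ : ℝ → ℝ) (hφ : MemLp φ ⊤ (μ.restrict (Icc 0 T)))
    (hφ0 : ∀ t ∈ Icc 0 T, 0 ≤ φ t)
    (α : ℝ) (hα : 0 ≤ α)
    (hineq : ∀ t ∈ Icc 0 T, φ t ≤ α + ∫ s in Ioc 0 t, g s * φ s ∂μ) :
    ∀ t ∈ Icc 0 T, φ t ≤ α * Real.exp ((1 / (1 - β)) * ∫ s in Ioc 0 t, g s ∂μ) := by
  classical
  set ν : Measure ℝ := (μ.restrict (Icc 0 T)).withDensity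
      (fun s => ((Real.toNNReal (g s) : ℝ≥0) : ℝ≥0∞)) with hν
  have hgaesm : AEStronglyMeasurable g (μ.restrict (Icc 0 T)) := hg_int.1
  have hνfin : IsFiniteMeasure ν := by
    constructor
    rw [hν, withDensity_apply _ MeasurableSet.univ, Measure.restrict_univ]
    have hle : ∫⁻ s, ((Real.toNNReal (g s) : ℝ≥0) : ℝ≥0∞) ∂(μ.restrict (Icc 0 T))
        ≤ ∫⁻ s, (‖g s‖₊ : ℝ≥0∞) ∂(μ.restrict (Icc 0 T)) := by
      refine lintegral_mono fun s => ?_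
      rw [show ((Real.toNNReal (g s) : ℝ≥0) : ℝ≥0∞) = ENNReal.ofReal (g s) from rfl,
        ← enorm_eq_nnnorm, ← ofReal_norm]
      exact ENNReal.ofReal_le_ofReal (le_abs_self _)
    exact lt_of_le_of_lt hle hg_int.2
  have hsubIoc : ∀ t, t ∈ Icc 0 T → Ioc (0:ℝ) t ⊆ Icc 0 T :=
    fun t ht x hx => ⟨hx.1.le, hx.2.trans ht.2⟩
  -- atoms of ν
  have hνatom : ∀ s : ℝ, ν {s} ≤ ENNReal.ofReal β := by
    intro s
    rw [hν, withDensity_apply _ (measurableSet_singleton s), lintegral_singleton,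
      Measure.restrict_apply (measurableSet_singleton s)]
    by_cases hs : s ∈ Icc 0 T
    · rw [inter_eq_self_of_subset_left (singleton_subset_iff.mpr hs)]
      calc ((Real.toNNReal (g s) : ℝ≥0) : ℝ≥0∞) * μ {s}
          = ENNReal.ofReal (g s) * ENNReal.ofReal ((μ {s}).toReal) := by
            rw [ENNReal.ofReal_toReal (measure_ne_top μ _)]
            exact rfl
      _ = ENNReal.ofReal (g s * (μ {s}).toReal) := (ENNReal.ofReal_mul (hg0 s hs)).symm
      _ ≤ ENNReal.ofReal β := ENNReal.ofReal_le_ofReal (by rw [mul_comm]; exact hatom s hs)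
    · rw [singleton_inter_eq_empty.mpr hs]
      simp
  -- conversion of integrals
  have hconv : ∀ t ∈ Icc 0 T, ∀ f : ℝ → ℝ,
      ∫ s in Ioc 0 t, f s ∂ν = ∫ s in Ioc 0 t, g s * f s ∂μ := by
    intro t ht f
    have h1 : ν.restrict (Ioc 0 t)
        = (μ.restrict (Ioc 0 t)).withDensity (fun s => ((Real.toNNReal (g s) : ℝ≥0) : ℝ≥0∞)) := by
      rw [hν, restrict_withDensity measurableSet_Ioc, Measure.restrict_restrict measurableSet_Ioc,
        inter_eq_self_of_subset_left (hsubIoc t ht)]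
    have hd : AEMeasurable (fun s => Real.toNNReal (g s)) (μ.restrict (Ioc 0 t)) :=
      measurable_real_toNNReal.comp_aemeasurable
        ((hgaesm.aemeasurable).mono_measure (Measure.restrict_mono (hsubIoc t ht) le_rfl))
    calc ∫ s in Ioc 0 t, f s ∂ν = ∫ s, f s ∂(ν.restrict (Ioc 0 t)) := rfl
    _ = ∫ s in Ioc 0 t, Real.toNNReal (g s) • f s ∂μ := by
        rw [h1, integral_withDensity_eq_integral_smul₀ hd f]
    _ = ∫ s in Ioc 0 t, g s * f s ∂μ := by
        refine setIntegral_congr_fun measurableSet_Ioc fun s hs => ?_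
        rw [NNReal.smul_def, Real.coe_toNNReal _ (hg0 s (hsubIoc t ht hs)), smul_eq_mul]
  -- V equals the integral of g
  have hVeq : ∀ t ∈ Icc 0 T, GronwallAux.V ν t = ∫ s in Ioc 0 t, g s ∂μ := by
    intro t ht
    have h1 : ν (Ioc 0 t) = ∫⁻ s in Ioc 0 t, ENNReal.ofReal (g s) ∂μ := by
      rw [hν, withDensity_apply _ measurableSet_Ioc,
        Measure.restrict_restrict measurableSet_Ioc,
        inter_eq_self_of_subset_left (hsubIoc t ht)]
      rfl
    rw [GronwallAux.V, h1, integral_eq_lintegral_of_nonneg_ae ?h1 ?h2]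
    case h1 =>
      filter_upwards [ae_restrict_mem measurableSet_Ioc] with s hs
      exact hg0 s (hsubIoc t ht hs)
    case h2 =>
      exact hgaesm.mono_measure (Measure.restrict_mono (hsubIoc t ht) le_rfl)
  -- essential sup bound on φ
  set C₀ : ℝ := (eLpNormEssSup φ (μ.restrict (Icc 0 T))).toReal with hC₀def
  have hC₀ : 0 ≤ C₀ := ENNReal.toReal_nonneg
  have hφtop : eLpNormEssSup φ (μ.restrict (Icc 0 T)) ≠ ⊤ := by
    have h2 := hφ.2
    rw [eLpNorm_exponent_top] at h2
    exact h2.ne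
  have hφae : ∀ᵐ s ∂(μ.restrict (Icc 0 T)), ‖φ s‖ ≤ C₀ := by
    filter_upwards [ae_le_eLpNormEssSup (f := φ) (μ := μ.restrict (Icc 0 T))] with s hs
    have := ENNReal.toReal_mono hφtop hs
    simpa using this
  -- pointwise bound M
  set M : ℝ := α + C₀ * GronwallAux.V ν T with hMdef
  have hVT0 : 0 ≤ GronwallAux.V ν T := GronwallAux.V_nonneg T
  have hM0 : 0 ≤ M := by positivity
  have hbound : ∀ t ∈ Icc 0 T, φ t ≤ M := by
    intro t ht
    have hgi : IntegrableOn g (Ioc 0 t) μ := hg_int.mono_set (hsubIoc t ht)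
    have hφaesm : AEStronglyMeasurable φ (μ.restrict (Ioc 0 t)) :=
      hφ.1.mono_measure (Measure.restrict_mono (hsubIoc t ht) le_rfl)
    have hφae' : ∀ᵐ s ∂(μ.restrict (Ioc 0 t)), ‖φ s‖ ≤ C₀ :=
      hφae.filter_mono (ae_mono (Measure.restrict_mono (hsubIoc t ht) le_rfl))
    have hgφint : IntegrableOn (fun s => g s * φ s) (Ioc 0 t) μ := by
      refine Integrable.mono' (hgi.norm.mul_const C₀) (hgi.1.mul hφaesm) ?_
      filter_upwards [hφae'] with s hs
      calc ‖g s * φ s‖ = ‖g s‖ * ‖φ s‖ := norm_mul _ _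
      _ ≤ ‖g s‖ * C₀ := mul_le_mul_of_nonneg_left hs (norm_nonneg _)
    have h2 : ∫ s in Ioc 0 t, g s * φ s ∂μ ≤ ∫ s in Ioc 0 t, g s * C₀ ∂μ := by
      refine integral_mono_ae hgφint (hgi.mul_const C₀) ?_
      filter_upwards [ae_restrict_mem measurableSet_Ioc, hφae'] with s hs1 hs2
      have hgs : 0 ≤ g s := hg0 s (hsubIoc t ht hs1)
      have : φ s ≤ C₀ := (le_abs_self _).trans hs2
      exact mul_le_mul_of_nonneg_left this hgs
    have h3 : ∫ s in Ioc 0 t, g s * C₀ ∂μ = (∫ s in Ioc 0 t, g s ∂μ) * C₀ :=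
      integral_mul_const C₀ g
    have h4 : ∫ s in Ioc 0 t, g s ∂μ = GronwallAux.V ν t := (hVeq t ht).symm
    have h5 : GronwallAux.V ν t ≤ GronwallAux.V ν T := GronwallAux.V_mono ht.2
    have h6 := hineq t ht
    have h7 : (∫ s in Ioc 0 t, g s ∂μ) * C₀ ≤ GronwallAux.V ν T * C₀ := by
      rw [h4]
      exact mul_le_mul_of_nonneg_right h5 hC₀
    rw [hMdef]
    nlinarith
  have hmain : ∀ t ∈ Icc 0 T, φ t ≤ α + ∫ s in Ioc 0 t, φ s ∂ν := by
    intro t ht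
    rw [hconv t ht φ]
    exact hineq t ht
  intro t ht
  have hres := GronwallAux.abstract_gronwall (ν := ν) hβ0 hβ1 hνatom hα hM0 hφ0 hbound hmain t ht
  rw [hVeq t ht] at hres
  rw [one_div]
  exact hres
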